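/- Let d ≥ 1 and let U, V be d × d unitary matrices. Start from the state |0⟩_Q|0⟩_{Q'} ⊗ |Φ⁺⟩_{AB} on ℂ² ⊗ ℂ² ⊗ ℂ^d ⊗ ℂ^d, where |Φ⁺⟩ := (1/√d)Σ_j |j⟩⊗|j⟩. Apply in order: a Hadamard on Q; a CNOT with control Q and target Q'; the controlled-U on QA (applying U to A when Q = |1⟩) together with the anticontrolled-Vᵀ on Q'B (applying Vᵀ to B when Q' = |0⟩); and finally a CNOT with control Q and target Q'. Then the reduced density matrix on qubit Q is ρ_Q = (1/2) [ [1, (1/d)Tr(U†V)], [(1/d)Tr(V†U), 1] ]; in particular, measuring Q in the X and Y bases yields the real and imaginary parts of (1/d)Tr(V†U) (the Power of Two Qubits). -/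

import Mathlib

open Matrix Complex

noncomputable section

/-- The Hadamard gate. -/
def Hmat : Matrix (Fin 2) (Fin 2) ℂ :=
  ((1 / Real.sqrt 2 : ℝ) : ℂ) • !![1, 1; 1, -1]

/-- The initial state `|0⟩_Q |0⟩_{Q'} ⊗ |Φ⁺⟩_{AB}` on `ℂ² ⊗ ℂ² ⊗ ℂ^d ⊗ ℂ^d`, where
`|Φ⁺⟩ = (1/√d) Σ_j |j⟩⊗|j⟩`. -/
def psi0 (d : ℕ) : Fin 2 × Fin 2 × Fin d × Fin d → ℂ :=
  fun p => if p.1 = 0 ∧ p.2.1 = 0 ∧ p.2.2.1 = p.2.2.2 then ((1 / Real.sqrt d : ℝ) : ℂ) else 0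

/-- The Hadamard gate on the qubit `Q` (identity elsewhere). -/
def gateHQ (d : ℕ) :
    Matrix (Fin 2 × Fin 2 × Fin d × Fin d) (Fin 2 × Fin 2 × Fin d × Fin d) ℂ :=
  Matrix.of fun p q => Hmat p.1 q.1 * (if p.2 = q.2 then 1 else 0)

/-- CNOT with control `Q` and target `Q'` (identity on `A`, `B`): `|c,t⟩ ↦ |c, t+c⟩`. -/
def gateCNOT (d : ℕ) :
    Matrix (Fin 2 × Fin 2 × Fin d × Fin d) (Fin 2 × Fin 2 × Fin d × Fin d) ℂ :=
  Matrix.of fun p q =>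
    if p.1 = q.1 ∧ p.2.1 = q.2.1 + q.1 ∧ p.2.2 = q.2.2 then 1 else 0

/-- The controlled-`U` on `QA` (applying `U` to `A` when `Q = |1⟩`) performed in parallel
with the anticontrolled-`Vᵀ` on `Q'B` (applying `Vᵀ` to `B` when `Q' = |0⟩`). -/
def gateCUV (d : ℕ) (U V : Matrix (Fin d) (Fin d) ℂ) :
    Matrix (Fin 2 × Fin 2 × Fin d × Fin d) (Fin 2 × Fin 2 × Fin d × Fin d) ℂ :=
  Matrix.of fun p q =>
    (if p.1 = q.1 ∧ p.2.1 = q.2.1 then 1 else 0) *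
    (if q.1 = 1 then U p.2.2.1 q.2.2.1 else (if p.2.2.1 = q.2.2.1 then 1 else 0)) *
    (if q.2.1 = 0 then Vᵀ p.2.2.2 q.2.2.2 else (if p.2.2.2 = q.2.2.2 then 1 else 0))

/-- The final state of the Power of Two Qubits circuit. -/
def psiFinal (d : ℕ) (U V : Matrix (Fin d) (Fin d) ℂ) :
    Fin 2 × Fin 2 × Fin d × Fin d → ℂ :=
  (gateCNOT d).mulVec ((gateCUV d U V).mulVec ((gateCNOT d).mulVec
    ((gateHQ d).mulVec (psi0 d))))

/-- The reduced density matrix on the qubit `Q` of a pure state. -/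
def rhoQ (d : ℕ) (ψ : Fin 2 × Fin 2 × Fin d × Fin d → ℂ) :
    Matrix (Fin 2) (Fin 2) ℂ :=
  Matrix.of fun a b => ∑ r : Fin 2 × Fin d × Fin d, ψ (a, r) * star (ψ (b, r))

variable {d : ℕ}

def c2 : ℂ := ((1 / Real.sqrt 2 : ℝ) : ℂ)
def cdd (d : ℕ) : ℂ := ((1 / Real.sqrt d : ℝ) : ℂ)


lemma Hmat_apply_zero (a : Fin 2) : Hmat a 0 = c2 := by
  fin_cases a <;> simp [Hmat, c2]

lemma step1 : (gateHQ d).mulVec (psi0 d) =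
    fun p => if p.2.1 = 0 ∧ p.2.2.1 = p.2.2.2 then c2 * cdd d else 0 := by
  funext p
  rw [mulVec, dotProduct]
  rw [Finset.sum_eq_single ((0 : Fin 2), p.2)]
  · simp only [gateHQ, psi0, of_apply, Hmat_apply_zero, cdd]
    by_cases h : p.2.1 = 0 ∧ p.2.2.1 = p.2.2.2 <;> simp [h]
  · rintro ⟨b1, b2⟩ - hb
    simp only [gateHQ, psi0, of_apply]
    by_cases h1 : b1 = 0
    · subst h1
      have : ¬ p.2 = b2 := fun h => hb (by simp [h])
      simp [this]
    · simp [h1]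
  · intro h; exact absurd (Finset.mem_univ _) h

lemma cnot_mulVec (ψ : Fin 2 × Fin 2 × Fin d × Fin d → ℂ) :
    (gateCNOT d).mulVec ψ = fun p => ψ (p.1, p.2.1 + p.1, p.2.2) := by
  funext p
  rw [mulVec, dotProduct]
  rw [Finset.sum_eq_single ((p.1 : Fin 2), (p.2.1 + p.1, p.2.2))]
  · have h : ∀ x y : Fin 2, x = x + y + y := by decide
    simp [gateCNOT, ← h]
  · rintro ⟨b1, b2, b34⟩ - hb
    simp only [gateCNOT, of_apply, ite_eq_right_iff, mul_eq_zero]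
    refine Or.inl ?_
    rintro ⟨h1, h2, h3⟩
    exfalso
    apply hb
    have h4 : ∀ x y z : Fin 2, x = y + z → y = x + z := by decide
    simp only [Prod.mk.injEq]
    refine ⟨h1.symm, ?_, h3.symm⟩
    rw [h1]
    exact h4 _ _ _ h2
  · intro h; exact absurd (Finset.mem_univ _) h

lemma step2 : (gateCNOT d).mulVec ((gateHQ d).mulVec (psi0 d)) =
    fun p => if p.1 = p.2.1 ∧ p.2.2.1 = p.2.2.2 then c2 * cdd d else 0 := by
  rw [step1, cnot_mulVec]
  funext p
  have h : ∀ x y : Fin 2, (y + x = 0 ↔ x = y) := by decide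
  simp [h]

lemma step3 (U V : Matrix (Fin d) (Fin d) ℂ) :
    (gateCUV d U V).mulVec (fun p => if p.1 = p.2.1 ∧ p.2.2.1 = p.2.2.2 then c2 * cdd d else 0) =
    fun p => if p.1 = p.2.1 then
      c2 * cdd d * (if p.1 = 0 then V p.2.2.1 p.2.2.2 else U p.2.2.1 p.2.2.2) else 0 := by
  funext p
  obtain ⟨a, b, i, j⟩ := p
  rw [mulVec, dotProduct]
  simp only [Fintype.sum_prod_type, Fin.sum_univ_two]
  fin_cases a <;> fin_cases b <;>
    simp [gateCUV, Finset.mul_sum, mul_comm, mul_assoc, mul_left_comm, Finset.sum_ite_eq,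
      Finset.sum_ite_eq', transpose_apply]

lemma psiFinal_eq (U V : Matrix (Fin d) (Fin d) ℂ) :
    psiFinal d U V = fun p => if p.2.1 = 0 then
      c2 * cdd d * (if p.1 = 0 then V p.2.2.1 p.2.2.2 else U p.2.2.1 p.2.2.2) else 0 := by
  rw [psiFinal, step2, step3, cnot_mulVec]
  funext p
  have h : ∀ x y : Fin 2, (x = y + x ↔ y = 0) := by decide
  simp [h]

lemma sum_conj (W W' : Matrix (Fin d) (Fin d) ℂ) :
    ∑ i : Fin d, ∑ j : Fin d, W i j * star (W' i j) = (W'ᴴ * W).trace := by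
  rw [trace]
  simp only [Matrix.mul_apply, diag_apply, conjTranspose_apply]
  rw [Finset.sum_comm]
  exact Finset.sum_congr rfl fun i _ => Finset.sum_congr rfl fun j _ => by ring

lemma csq : c2 * cdd d * (c2 * cdd d) = 1 / (2 * d) := by
  have h2 : (Real.sqrt 2 : ℝ) * Real.sqrt 2 = 2 := Real.mul_self_sqrt (by norm_num)
  have hdd : (Real.sqrt d : ℝ) * Real.sqrt d = d := Real.mul_self_sqrt (Nat.cast_nonneg d)
  simp only [c2, cdd, ← Complex.ofReal_mul]
  rw [show (1 / Real.sqrt 2 * (1 / Real.sqrt d) * (1 / Real.sqrt 2 * (1 / Real.sqrt d)))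
      = 1 / (2 * (d : ℝ)) by
    rw [show (1 / Real.sqrt 2 * (1 / Real.sqrt d) * (1 / Real.sqrt 2 * (1 / Real.sqrt d)))
        = 1 / (Real.sqrt 2 * Real.sqrt 2 * (Real.sqrt d * Real.sqrt d)) by ring, h2, hdd]]
  push_cast
  ring

/-- **Power of Two Qubits.** After the circuit
`CNOT_{QQ'} ∘ (C_U ⊗ anti-C_{Vᵀ}) ∘ CNOT_{QQ'} ∘ H_Q` applied to
`|0⟩|0⟩|Φ⁺⟩`, the reduced state of `Q` is
`ρ_Q = (1/2)[[1, Tr(U†V)/d], [Tr(V†U)/d, 1]]`. -/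
theorem stmt13 (d : ℕ) (hd : 1 ≤ d) (U V : Matrix (Fin d) (Fin d) ℂ)
    (hU : U ∈ Matrix.unitaryGroup (Fin d) ℂ)
    (hV : V ∈ Matrix.unitaryGroup (Fin d) ℂ) :
    rhoQ d (psiFinal d U V) =
      (1 / 2 : ℂ) • !![1, (Uᴴ * V).trace / d; (Vᴴ * U).trace / d, 1] := by
  have hd0 : (d : ℂ) ≠ 0 := Nat.cast_ne_zero.mpr (by omega)
  have hstar : star (c2 * cdd d) = c2 * cdd d := by
    simp [c2, cdd, ← Complex.ofReal_mul]
  have hUV : ∀ W, W ∈ Matrix.unitaryGroup (Fin d) ℂ → (Wᴴ * W).trace = d := by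
    intro W hW
    have := hW.1
    rw [show (star W : Matrix (Fin d) (Fin d) ℂ) = Wᴴ from rfl] at this
    rw [this, Matrix.trace_one]
    simp
  have key : ∀ W W' : Matrix (Fin d) (Fin d) ℂ,
      ∑ i : Fin d, ∑ j : Fin d, (c2 * cdd d * W i j) * (c2 * cdd d * star (W' i j))
        = (W'ᴴ * W).trace / (2 * d) := by
    intro W W'
    have h : ∀ i j : Fin d, (c2 * cdd d * W i j) * (c2 * cdd d * star (W' i j))
        = (c2 * cdd d * (c2 * cdd d)) * (W i j * star (W' i j)) := fun i j => by ring
    simp only [h, ← Finset.mul_sum]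
    rw [sum_conj, csq]
    ring
  rw [psiFinal_eq]
  ext a b
  simp only [rhoQ, of_apply, Fintype.sum_prod_type, Fin.sum_univ_two]
  fin_cases a <;> fin_cases b <;>
    simp only [Fin.zero_eta, Fin.mk_one, Fin.isValue, show ((1:Fin 2) = 0) = False by simp, show ((0:Fin 2) = 0) = True by simp,
      if_true, if_false, ite_true, ite_false, star_zero, mul_zero, zero_mul, add_zero,
      Finset.sum_const_zero, star_mul', hstar, key] <;>
    simp only [hUV U hU, hUV V hV, Matrix.smul_apply, of_apply, Matrix.cons_val', Matrix.cons_val_zero,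
      Matrix.cons_val_one, Matrix.head_cons, Matrix.head_fin_const, Matrix.empty_val',
      Matrix.cons_val_fin_one, smul_eq_mul] <;>
    field_simp <;>
    simp only [show ∀ W : Matrix (Fin d) (Fin d) ℂ, (fun i j => W i j) = W from fun _ => rfl,
      hUV U hU, hUV V hV] <;>
    ring

end
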